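/- Let F, F̃ : ℝ^d → ℝ be differentiable functions such that the gradient of F is L-Lipschitz for some L > 0 and F is bounded below by F* ∈ ℝ (i.e., F(w) ≥ F* for all w). Suppose there exist constants ω ∈ [0,1) and ε ≥ 0 such that for all w, ‖∇F̃(w) − ∇F(w)‖ ≤ ω·‖∇F(w)‖ + ε. Fix a step size η with 0 < η ≤ (1−ω)/(4·L·(1+ω)²), and define the iterates w_{t+1} = w_t − η·∇F̃(w_t) starting from any w_0. Then for every T ≥ 1, (1/T) · Σ_{t=0}^{T−1} ‖∇F(w_t)‖² ≤ 2·(F(w_0) − F*)/(η·(1−ω)·T) + 2·ε²/(1−ω)² + 2·L·η·ε²/(1−ω). -/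

import Mathlib

open Finset

lemma line_hasDerivAt {d : ℕ} (F : EuclideanSpace ℝ (Fin d) → ℝ)
    (hF : Differentiable ℝ F) (x v : EuclideanSpace ℝ (Fin d)) (t : ℝ) :
    HasDerivAt (fun s : ℝ => F (x + s • v))
      (inner ℝ (gradient F (x + t • v)) v : ℝ) t := by
  have hline : HasDerivAt (fun s : ℝ => x + s • v) v t := by
    simpa using ((hasDerivAt_id t).smul_const v).const_add x
  have hgrad := (hF (x + t • v)).hasGradientAt
  have hfd := hgrad.hasFDerivAt
  have := hfd.comp_hasDerivAt t hline
  have h' : HasDerivAt (fun s : ℝ => F (x + s • v))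
      ((InnerProductSpace.toDual ℝ _ (gradient F (x + t • v))) v) t := this
  rw [InnerProductSpace.toDual_apply_apply] at h'
  exact h'

/-- Descent lemma: `F (x+v) ≤ F x + ⟪∇F x, v⟫ + L/2 ‖v‖²`. -/
lemma descent_lemma {d : ℕ} (F : EuclideanSpace ℝ (Fin d) → ℝ)
    (hF : Differentiable ℝ F) (L : ℝ) (hL : 0 ≤ L)
    (hLip : ∀ v w, ‖gradient F v - gradient F w‖ ≤ L * ‖v - w‖)
    (x v : EuclideanSpace ℝ (Fin d)) :
    F (x + v) ≤ F x + (inner ℝ (gradient F x) v : ℝ) + L / 2 * ‖v‖ ^ 2 := by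
  set c : ℝ := inner ℝ (gradient F x) v with hc
  set h : ℝ → ℝ := fun t => F (x + t • v) - t * c - L * ‖v‖ ^ 2 / 2 * t ^ 2 with hh
  have hder : ∀ t : ℝ, HasDerivAt h
      ((inner ℝ (gradient F (x + t • v)) v : ℝ) - c - L * ‖v‖ ^ 2 * t) t := by
    intro t
    have h1 := line_hasDerivAt F hF x v t
    have h2 : HasDerivAt (fun s : ℝ => s * c) c t := by
      simpa using (hasDerivAt_id t).mul_const c
    have h3 : HasDerivAt (fun s : ℝ => L * ‖v‖ ^ 2 / 2 * s ^ 2)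
        (L * ‖v‖ ^ 2 / 2 * (2 * t)) t := by
      have := (hasDerivAt_pow 2 t).const_mul (L * ‖v‖ ^ 2 / 2)
      simpa using this
    have := (h1.sub h2).sub h3
    have e : (inner ℝ (gradient F (x + t • v)) v : ℝ) - c - L * ‖v‖ ^ 2 * t
        = inner ℝ (gradient F (x + t • v)) v - c - L * ‖v‖ ^ 2 / 2 * (2 * t) := by ring
    rw [e]
    exact this
  have hanti : AntitoneOn h (Set.Icc (0:ℝ) 1) := by
    apply antitoneOn_of_deriv_nonpos (convex_Icc 0 1)
    · exact fun t _ => (hder t).continuousAt.continuousWithinAt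
    · intro t ht
      exact ((hder t).differentiableAt).differentiableWithinAt
    · intro t ht
      rw [interior_Icc] at ht
      rw [(hder t).deriv]
      have hineq : (inner ℝ (gradient F (x + t • v)) v : ℝ) - c
          ≤ L * ‖v‖ ^ 2 * t := by
        have h1 : (inner ℝ (gradient F (x + t • v)) v : ℝ) - c
            = inner ℝ (gradient F (x + t • v) - gradient F x) v := by
          rw [inner_sub_left]
        rw [h1]
        calc (inner ℝ (gradient F (x + t • v) - gradient F x) v : ℝ)
            ≤ ‖gradient F (x + t • v) - gradient F x‖ * ‖v‖ :=
              real_inner_le_norm _ _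
          _ ≤ L * ‖x + t • v - x‖ * ‖v‖ := by
              have := hLip (x + t • v) x
              exact mul_le_mul_of_nonneg_right this (norm_nonneg _)
          _ = L * ‖v‖ ^ 2 * t := by
              have : ‖x + t • v - x‖ = t * ‖v‖ := by
                rw [add_sub_cancel_left, norm_smul, Real.norm_eq_abs,
                  abs_of_pos ht.1]
              rw [this]; ring
      linarith
  have h10 := hanti (Set.left_mem_Icc.2 zero_le_one) (Set.right_mem_Icc.2 zero_le_one)
    zero_le_one
  simp only [hh, one_smul, zero_smul, add_zero, one_mul, zero_mul, one_pow, zero_pow,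
    mul_zero, mul_one, sub_zero] at h10
  linarith

set_option maxHeartbeats 1000000 in
/-- **Theorem 1 core (SCOPE, deterministic).** Inexact gradient descent on an
`L`-smooth objective `F`, bounded below by `F*`, using the surrogate gradient `∇F̃`
that satisfies the relative approximation `‖∇F̃(w) − ∇F(w)‖ ≤ ω‖∇F(w)‖ + ε`, with step
size `0 < η ≤ (1−ω)/(4L(1+ω)²)`, drives the average squared gradient norm of `F` to a
floor of order `ε²/(1−ω)²` at rate `O(1/T)`. -/
theorem inexact_gd_convergence
    {d : ℕ} (F Ft : EuclideanSpace ℝ (Fin d) → ℝ)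
    (hF : Differentiable ℝ F) (hFt : Differentiable ℝ Ft)
    (L : ℝ) (hL : 0 < L)
    (hLip : ∀ v w, ‖gradient F v - gradient F w‖ ≤ L * ‖v - w‖)
    (Fstar : ℝ) (hbdd : ∀ w, Fstar ≤ F w)
    (ω ε : ℝ) (hω0 : 0 ≤ ω) (hω1 : ω < 1) (hε : 0 ≤ ε)
    (happrox : ∀ w, ‖gradient Ft w - gradient F w‖ ≤ ω * ‖gradient F w‖ + ε)
    (η : ℝ) (hη0 : 0 < η) (hη : η ≤ (1 - ω) / (4 * L * (1 + ω) ^ 2))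
    (w : ℕ → EuclideanSpace ℝ (Fin d))
    (hiter : ∀ t, w (t + 1) = w t - η • gradient Ft (w t))
    (T : ℕ) (hT : 1 ≤ T) :
    (1 / (T : ℝ)) * ∑ t ∈ Finset.range T, ‖gradient F (w t)‖ ^ 2
      ≤ 2 * (F (w 0) - Fstar) / (η * (1 - ω) * T)
        + 2 * ε ^ 2 / (1 - ω) ^ 2 + 2 * L * η * ε ^ 2 / (1 - ω) := by
  have h1ω : 0 < 1 - ω := by linarith
  have hηL : η * L * (1 + ω) ^ 2 ≤ (1 - ω) / 4 := by
    have hpos : 0 < 4 * L * (1 + ω) ^ 2 := by positivity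
    rw [le_div_iff₀ hpos] at hη
    nlinarith
  set C : ℝ := η * ε ^ 2 / (1 - ω) + L * η ^ 2 * ε ^ 2 with hC
  have key : ∀ t, η * (1 - ω) / 2 * ‖gradient F (w t)‖ ^ 2
      ≤ F (w t) - F (w (t + 1)) + C := by
    intro t
    set g := gradient F (w t) with hg
    set gt := gradient Ft (w t) with hgt
    have hstep : w (t + 1) = w t + (-η) • gt := by
      rw [hiter t, sub_eq_add_neg, neg_smul]
    have hdesc := descent_lemma F hF L hL.le hLip (w t) ((-η) • gt)
    rw [← hstep] at hdesc
    have hinner : (inner ℝ g ((-η) • gt) : ℝ) = -η * inner ℝ g gt := by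
      rw [real_inner_smul_right]
    have hnorm : ‖(-η) • gt‖ ^ 2 = η ^ 2 * ‖gt‖ ^ 2 := by
      rw [norm_smul, Real.norm_eq_abs, abs_neg, abs_of_pos hη0, mul_pow]
    rw [hinner, hnorm] at hdesc
    -- bound ⟪g, gt⟫ from below
    have happ := happrox (w t)
    rw [← hg, ← hgt] at happ
    have hib : |(inner ℝ g (gt - g) : ℝ)| ≤ ‖g‖ * (ω * ‖g‖ + ε) := by
      calc |(inner ℝ g (gt - g) : ℝ)| ≤ ‖g‖ * ‖gt - g‖ := abs_real_inner_le_norm _ _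
        _ ≤ ‖g‖ * (ω * ‖g‖ + ε) :=
            mul_le_mul_of_nonneg_left (by simpa [norm_sub_rev] using happ) (norm_nonneg _)
    have hsplit : (inner ℝ g gt : ℝ) = ‖g‖ ^ 2 + inner ℝ g (gt - g) := by
      rw [inner_sub_right, real_inner_self_eq_norm_sq]; ring
    have hlow : (1 - ω) * ‖g‖ ^ 2 - ε * ‖g‖ ≤ (inner ℝ g gt : ℝ) := by
      have := abs_le.1 hib
      nlinarith [this.1]
    -- bound ‖gt‖²
    have hgtb : ‖gt‖ ≤ (1 + ω) * ‖g‖ + ε := by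
      have h0 : ‖gt‖ ≤ ‖g‖ + ‖gt - g‖ := by
        have := norm_add_le g (gt - g)
        simpa using this
      linarith
    have hgt2 : ‖gt‖ ^ 2 ≤ 2 * (1 + ω) ^ 2 * ‖g‖ ^ 2 + 2 * ε ^ 2 := by
      nlinarith [norm_nonneg gt, norm_nonneg g, sq_nonneg ((1 + ω) * ‖g‖ - ε)]
    -- Young: ε‖g‖ ≤ (1-ω)/4 ‖g‖² + ε²/(1-ω)
    have hyoung : ε * ‖g‖ ≤ (1 - ω) / 4 * ‖g‖ ^ 2 + ε ^ 2 / (1 - ω) := by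
      have hkey : (1 - ω) * (ε * ‖g‖)
          ≤ (1 - ω) * ((1 - ω) / 4 * ‖g‖ ^ 2) + ε ^ 2 := by
        nlinarith [sq_nonneg ((1 - ω) * ‖g‖ / 2 - ε)]
      calc ε * ‖g‖ = ((1 - ω) * (ε * ‖g‖)) / (1 - ω) := by field_simp
        _ ≤ ((1 - ω) * ((1 - ω) / 4 * ‖g‖ ^ 2) + ε ^ 2) / (1 - ω) := by gcongr
        _ = (1 - ω) / 4 * ‖g‖ ^ 2 + ε ^ 2 / (1 - ω) := by field_simp
    -- combine
    have hsmall : L * η ^ 2 * (1 + ω) ^ 2 * ‖g‖ ^ 2 ≤ η * (1 - ω) / 4 * ‖g‖ ^ 2 := by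
      nlinarith [mul_le_mul_of_nonneg_right hηL
        (by positivity : (0:ℝ) ≤ η * ‖g‖ ^ 2)]
    have h1 : η * ((1 - ω) * ‖g‖ ^ 2 - ε * ‖g‖) ≤ η * inner ℝ g gt :=
      mul_le_mul_of_nonneg_left hlow hη0.le
    have h2 : L * η ^ 2 / 2 * ‖gt‖ ^ 2
        ≤ L * η ^ 2 / 2 * (2 * (1 + ω) ^ 2 * ‖g‖ ^ 2 + 2 * ε ^ 2) :=
      mul_le_mul_of_nonneg_left hgt2 (by positivity)
    have h3 : η * (ε * ‖g‖) ≤ η * ((1 - ω) / 4 * ‖g‖ ^ 2 + ε ^ 2 / (1 - ω)) :=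
      mul_le_mul_of_nonneg_left hyoung hη0.le
    rw [hC, mul_div_assoc η (ε ^ 2) (1 - ω)]
    set E : ℝ := ε ^ 2 / (1 - ω) with hE
    linarith [hdesc, h1, h2, h3, hsmall]
  -- sum the per-step inequalities
  have hsum : η * (1 - ω) / 2 * ∑ t ∈ Finset.range T, ‖gradient F (w t)‖ ^ 2
      ≤ (F (w 0) - Fstar) + T * C := by
    have htel : ∑ t ∈ Finset.range T, (F (w t) - F (w (t + 1)))
        = F (w 0) - F (w T) := by
      rw [Finset.sum_range_sub' (fun t => F (w t))]
    calc η * (1 - ω) / 2 * ∑ t ∈ Finset.range T, ‖gradient F (w t)‖ ^ 2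
        = ∑ t ∈ Finset.range T, η * (1 - ω) / 2 * ‖gradient F (w t)‖ ^ 2 := by
          rw [Finset.mul_sum]
      _ ≤ ∑ t ∈ Finset.range T, (F (w t) - F (w (t + 1)) + C) :=
          Finset.sum_le_sum fun t _ => key t
      _ = (F (w 0) - F (w T)) + T * C := by
          rw [Finset.sum_add_distrib, htel, Finset.sum_const, Finset.card_range,
            nsmul_eq_mul]
      _ ≤ (F (w 0) - Fstar) + T * C := by linarith [hbdd (w T)]
  have hT0 : (0:ℝ) < T := by exact_mod_cast hT
  set S := ∑ t ∈ Finset.range T, ‖gradient F (w t)‖ ^ 2 with hS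
  have hrhs : 2 * ε ^ 2 / (1 - ω) ^ 2 + 2 * L * η * ε ^ 2 / (1 - ω)
      = 2 * C / (η * (1 - ω)) := by
    rw [hC]
    field_simp
  rw [add_assoc, hrhs]
  have hpos : (0:ℝ) < η * (1 - ω) := by positivity
  have hA : S ≤ 2 * (F (w 0) - Fstar) / (η * (1 - ω))
      + (T:ℝ) * (2 * C / (η * (1 - ω))) := by
    calc S = 2 / (η * (1 - ω)) * (η * (1 - ω) / 2 * S) := by
          field_simp
      _ ≤ 2 / (η * (1 - ω)) * ((F (w 0) - Fstar) + T * C) :=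
          mul_le_mul_of_nonneg_left hsum (by positivity)
      _ = 2 * (F (w 0) - Fstar) / (η * (1 - ω))
          + (T:ℝ) * (2 * C / (η * (1 - ω))) := by
          field_simp
  calc (1 / (T:ℝ)) * S
      ≤ (1 / (T:ℝ)) * (2 * (F (w 0) - Fstar) / (η * (1 - ω))
          + (T:ℝ) * (2 * C / (η * (1 - ω)))) :=
        mul_le_mul_of_nonneg_left hA (by positivity)
    _ = 2 * (F (w 0) - Fstar) / (η * (1 - ω) * T) + 2 * C / (η * (1 - ω)) := by
        field_simp
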